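/- The quotient map q : ℂ² × ℝ → Q_θ is an open map. -/

import Mathlib

open Filter Topology

/-- The equivalence relation `∼` on `ℂ² × ℝ`: `((z₁,z₂),τ) ∼ ((w₁,w₂),σ)` iff
`|z₁| = |w₁|`, `|z₂| = |w₂|`, and moreover `τ - σ ∈ ℤ` when `z₁ ≠ 0 = z₂`,
`τ - σ ∈ θℤ` when `z₁ = 0 ≠ z₂`, and `τ = σ` when `z₁ = z₂ = 0`. -/
def mrel (θ : ℝ) (p q : (ℂ × ℂ) × ℝ) : Prop :=
  ‖p.1.1‖ = ‖q.1.1‖ ∧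
  ‖p.1.2‖ = ‖q.1.2‖ ∧
  (p.1.1 ≠ 0 ∧ p.1.2 = 0 → ∃ k : ℤ, p.2 - q.2 = (k : ℝ)) ∧
  (p.1.1 = 0 ∧ p.1.2 ≠ 0 → ∃ k : ℤ, p.2 - q.2 = θ * (k : ℝ)) ∧
  (p.1.1 = 0 ∧ p.1.2 = 0 → p.2 = q.2)

theorem mrel_equivalence (θ : ℝ) : Equivalence (mrel θ) := by
  constructor
  · exact fun p => ⟨rfl, rfl, fun _ => ⟨0, by simp⟩, fun _ => ⟨0, by simp⟩, fun _ => rfl⟩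
  · rintro p q ⟨h1, h2, h3, h4, h5⟩
    have key : ∀ a b : ℂ, ‖a‖ = ‖b‖ → (a = 0 ↔ b = 0) := by
      intro a b h
      rw [← norm_eq_zero, h, norm_eq_zero]
    have e1 : p.1.1 = 0 ↔ q.1.1 = 0 := key _ _ h1
    have e2 : p.1.2 = 0 ↔ q.1.2 = 0 := key _ _ h2
    refine ⟨h1.symm, h2.symm, ?_, ?_, ?_⟩
    · rintro ⟨hq1, hq2⟩
      obtain ⟨k, hk⟩ := h3 ⟨fun h => hq1 (e1.mp h), e2.mpr hq2⟩
      exact ⟨-k, by push_cast; linarith⟩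
    · rintro ⟨hq1, hq2⟩
      obtain ⟨k, hk⟩ := h4 ⟨e1.mpr hq1, fun h => hq2 (e2.mp h)⟩
      exact ⟨-k, by push_cast; linarith⟩
    · rintro ⟨hq1, hq2⟩
      exact (h5 ⟨e1.mpr hq1, e2.mpr hq2⟩).symm
  · rintro p q r ⟨h1, h2, h3, h4, h5⟩ ⟨g1, g2, g3, g4, g5⟩
    have key : ∀ a b : ℂ, ‖a‖ = ‖b‖ → (a = 0 ↔ b = 0) := by
      intro a b h
      rw [← norm_eq_zero, h, norm_eq_zero]
    have e1 : p.1.1 = 0 ↔ q.1.1 = 0 := key _ _ h1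
    have e2 : p.1.2 = 0 ↔ q.1.2 = 0 := key _ _ h2
    refine ⟨h1.trans g1, h2.trans g2, ?_, ?_, ?_⟩
    · rintro ⟨hp1, hp2⟩
      obtain ⟨k, hk⟩ := h3 ⟨hp1, hp2⟩
      obtain ⟨l, hl⟩ := g3 ⟨fun h => hp1 (e1.mpr h), e2.mp hp2⟩
      exact ⟨k + l, by push_cast; linarith⟩
    · rintro ⟨hp1, hp2⟩
      obtain ⟨k, hk⟩ := h4 ⟨hp1, hp2⟩
      obtain ⟨l, hl⟩ := g4 ⟨e1.mp hp1, fun h => hp2 (e2.mpr h)⟩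
      refine ⟨k + l, by push_cast; linarith [mul_add θ (k : ℝ) (l : ℝ)]⟩
    · rintro ⟨hp1, hp2⟩
      exact (h5 ⟨hp1, hp2⟩).trans (g5 ⟨e1.mp hp1, e2.mp hp2⟩)

/-- The setoid on `ℂ² × ℝ` given by the relation `∼`. -/
def mSetoid (θ : ℝ) : Setoid ((ℂ × ℂ) × ℝ) := ⟨mrel θ, mrel_equivalence θ⟩

/-- The quotient space `Q_θ = (ℂ² × ℝ)/∼`, with the quotient topology. -/
abbrev Qspace (θ : ℝ) : Type := Quotient (mSetoid θ)

/-- The quotient map `q : ℂ² × ℝ → Q_θ`. -/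
def qmap (θ : ℝ) : (ℂ × ℂ) × ℝ → Qspace θ := Quotient.mk (mSetoid θ)



/-- Rescale `w` to have the same phase as `u`, where `|u| = |c|` is intended. -/
noncomputable def gm (c u w : ℂ) : ℂ :=
  if c = 0 then w else u * ((‖w‖ / ‖c‖ : ℝ) : ℂ)

lemma gm_continuous (c u : ℂ) : Continuous (gm c u) := by
  unfold gm
  split
  · exact continuous_id
  · exact continuous_const.mul
      (Complex.continuous_ofReal.comp (continuous_norm.div_const _))

lemma gm_abs {c u : ℂ} (h : ‖u‖ = ‖c‖) (w : ℂ) :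
    ‖gm c u w‖ = ‖w‖ := by
  unfold gm
  split
  · rfl
  · rename_i hc
    rw [norm_mul, Complex.norm_real, Real.norm_eq_abs,
      abs_of_nonneg (div_nonneg (norm_nonneg _) (norm_nonneg _)), h,
      mul_div_assoc', mul_comm, mul_div_assoc, div_self (norm_ne_zero_iff.mpr hc), mul_one]

lemma gm_zero_iff {c u : ℂ} (h : ‖u‖ = ‖c‖) (w : ℂ) :
    gm c u w = 0 ↔ w = 0 := by
  rw [← norm_eq_zero, gm_abs h, norm_eq_zero]

lemma gm_self {c u : ℂ} (h : ‖u‖ = ‖c‖) : gm c u c = u := by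
  unfold gm
  split
  · rename_i hc
    rw [hc] at h
    simp only [norm_zero] at h
    rw [hc, ← norm_eq_zero.mp h]
  · rename_i hc
    rw [div_self (norm_ne_zero_iff.mpr hc)]
    simp

/-- The quotient map `q : ℂ² × ℝ → Q_θ` is an open map. -/
theorem isOpenMap_qmap (θ : ℝ) (hθ : Irrational θ) : IsOpenMap (qmap θ) := by
  intro U hU
  have hq : IsQuotientMap (qmap θ) := isQuotientMap_quot_mk
  rw [← hq.isOpen_preimage]
  rw [isOpen_iff_forall_mem_open]
  rintro x hx
  simp only [Set.mem_preimage, Set.mem_image] at hx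
  obtain ⟨u, huU, hueq⟩ := hx
  have hrel : mrel θ u x := Quotient.exact hueq
  obtain ⟨h1, h2, h3, h4, h5⟩ := hrel
  have e1 : u.1.1 = 0 ↔ x.1.1 = 0 := by
    rw [← norm_eq_zero, h1, norm_eq_zero]
  have e2 : u.1.2 = 0 ↔ x.1.2 = 0 := by
    rw [← norm_eq_zero, h2, norm_eq_zero]
  classical
  set φ : (ℂ × ℂ) × ℝ → (ℂ × ℂ) × ℝ :=
    fun z => ((gm x.1.1 u.1.1 z.1.1, gm x.1.2 u.1.2 z.1.2), u.2 + (z.2 - x.2)) with hφdef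
  have hφcont : Continuous φ := by
    refine Continuous.prodMk (Continuous.prodMk ?_ ?_) ?_
    · exact (gm_continuous _ _).comp continuous_fst.fst
    · exact (gm_continuous _ _).comp continuous_fst.snd
    · exact continuous_const.add (continuous_snd.sub continuous_const)
  refine ⟨φ ⁻¹' U
    ∩ (fun z : (ℂ × ℂ) × ℝ => z.1.1) ⁻¹' (if x.1.1 = 0 then Set.univ else {(0:ℂ)}ᶜ)
    ∩ (fun z : (ℂ × ℂ) × ℝ => z.1.2) ⁻¹' (if x.1.2 = 0 then Set.univ else {(0:ℂ)}ᶜ),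
    ?_, ?_, ?_⟩
  · rintro z ⟨⟨hzU, hz1⟩, hz2⟩
    have hz1' : x.1.1 ≠ 0 → z.1.1 ≠ 0 := by
      intro h
      rw [Set.mem_preimage, if_neg h] at hz1
      exact hz1
    have hz2' : x.1.2 ≠ 0 → z.1.2 ≠ 0 := by
      intro h
      rw [Set.mem_preimage, if_neg h] at hz2
      exact hz2
    refine ⟨φ z, hzU, Quotient.sound ?_⟩
    have habs1 : ‖(φ z).1.1‖ = ‖z.1.1‖ := gm_abs h1 _
    have habs2 : ‖(φ z).1.2‖ = ‖z.1.2‖ := gm_abs h2 _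
    have hzero1 : (φ z).1.1 = 0 ↔ z.1.1 = 0 := gm_zero_iff h1 _
    have hzero2 : (φ z).1.2 = 0 ↔ z.1.2 = 0 := gm_zero_iff h2 _
    have htau : (φ z).2 = u.2 + (z.2 - x.2) := rfl
    refine ⟨habs1, habs2, ?_, ?_, ?_⟩
    · rintro ⟨hg1, hg2⟩
      have hz20 : z.1.2 = 0 := hzero2.mp hg2
      have hx20 : x.1.2 = 0 := by by_contra h; exact hz2' h hz20
      have hu20 : u.1.2 = 0 := e2.mpr hx20
      by_cases hx10 : x.1.1 = 0
      · have h52 := h5 ⟨e1.mpr hx10, hu20⟩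
        refine ⟨0, ?_⟩
        rw [htau]
        push_cast
        linarith
      · obtain ⟨k, hk⟩ := h3 ⟨fun h => hx10 (e1.mp h), hu20⟩
        refine ⟨k, ?_⟩
        rw [htau]
        linarith
    · rintro ⟨hg1, hg2⟩
      have hz10 : z.1.1 = 0 := hzero1.mp hg1
      have hx10 : x.1.1 = 0 := by by_contra h; exact hz1' h hz10
      have hu10 : u.1.1 = 0 := e1.mpr hx10
      by_cases hx20 : x.1.2 = 0
      · have h52 := h5 ⟨hu10, e2.mpr hx20⟩
        refine ⟨0, ?_⟩
        rw [htau]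
        push_cast
        rw [mul_zero]
        linarith
      · obtain ⟨k, hk⟩ := h4 ⟨hu10, fun h => hx20 (e2.mp h)⟩
        refine ⟨k, ?_⟩
        rw [htau]
        linarith
    · rintro ⟨hg1, hg2⟩
      have hz10 : z.1.1 = 0 := hzero1.mp hg1
      have hz20 : z.1.2 = 0 := hzero2.mp hg2
      have hx10 : x.1.1 = 0 := by by_contra h; exact hz1' h hz10
      have hx20 : x.1.2 = 0 := by by_contra h; exact hz2' h hz20
      have h52 := h5 ⟨e1.mpr hx10, e2.mpr hx20⟩
      rw [htau]
      linarith
  · refine IsOpen.inter (IsOpen.inter (hU.preimage hφcont) ?_) ?_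
    · refine IsOpen.preimage continuous_fst.fst ?_
      split
      · exact isOpen_univ
      · exact isOpen_compl_singleton
    · refine IsOpen.preimage continuous_fst.snd ?_
      split
      · exact isOpen_univ
      · exact isOpen_compl_singleton
  · refine ⟨⟨?_, ?_⟩, ?_⟩
    · show φ x ∈ U
      have hfx : φ x = u := by
        show ((gm x.1.1 u.1.1 x.1.1, gm x.1.2 u.1.2 x.1.2), u.2 + (x.2 - x.2)) = u
        rw [gm_self h1, gm_self h2]
        simp
      rwa [hfx]
    · show x.1.1 ∈ (if x.1.1 = 0 then Set.univ else {(0:ℂ)}ᶜ)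
      by_cases h : x.1.1 = 0 <;> simp [h]
    · show x.1.2 ∈ (if x.1.2 = 0 then Set.univ else {(0:ℂ)}ᶜ)
      by_cases h : x.1.2 = 0 <;> simp [h]
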